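/- Let T be a triangulated category with a split t-structure (T^{≥0}, T^{≤0}) with heart H = T^{≥0} ∩ T^{≤0}. Then Hom_T(H, H[n]) = 0 for all n ≠ 0, 1; that is, the heart is an admissible hereditary subcategory of T. -/

import Mathlib

/-!
STATEMENT 3: If `(T^{≥0}, T^{≤0})` is a split t-structure on a triangulated category `T`
with heart `H = T^{≥0} ∩ T^{≤0}`, then `Hom_T(H, H⟦n⟧) = 0` for all `n ≠ 0, 1`; i.e. the
heart is an admissible hereditary subcategory of `T`.  Splitness is expressed by saying
that every object admits a truncation triangle `X → X⁺ → X⁻ → X⟦1⟧` with `X⁺ ∈ T^{≥1}`,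
`X⁻ ∈ T^{≤-1}` and zero connecting morphism `X⁺ → X⁻`.
-/

open CategoryTheory Category Limits Pretriangulated Triangulated

section Aux

variable {C : Type*} [Category C] [Preadditive C] [HasZeroObject C] [HasShift C ℤ]
  [∀ n : ℤ, (shiftFunctor C n).Additive] [Pretriangulated C] (t : TStructure C)

/-- Any morphism from an object `≤ a` to an object `≥ b` with `a < b` vanishes. -/
lemma aux_hom_zero {X Y : C} (a b : ℤ) (hab : a < b)
    (hX : t.le a X) (hY : t.ge b Y) (f : X ⟶ Y) : f = 0 := by
  have h1 : t.le 0 (X⟦a⟧) := t.le_shift a a 0 (by omega) X hX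
  have h2 : t.ge (b - a) (Y⟦a⟧) := t.ge_shift b a (b - a) (by omega) Y hY
  have h3 : t.ge 1 (Y⟦a⟧) := t.ge_antitone (by omega) _ h2
  have hz : (shiftFunctor C a).map f = 0 := t.zero' _ h1 h3
  apply (shiftFunctor C a).map_injective
  rw [hz, Functor.map_zero]

/-- Splitness implies `Hom(T^{≥1}, T^{≤-1}) = 0`. -/
lemma aux_split_hom_zero
    (hsplit : ∀ X : C, ∃ (P Q : C) (_ : t.ge 1 P) (_ : t.le (-1) Q)
        (f : X ⟶ P) (h : Q ⟶ X⟦(1 : ℤ)⟧),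
        Triangle.mk f (0 : P ⟶ Q) h ∈ distTriang C)
    {A B : C} (hA : t.ge 1 A) (hB : t.le (-1) B) (g : A ⟶ B) : g = 0 := by
  obtain ⟨Z, x, y, hZ⟩ := distinguished_cocone_triangle g
  set T1 : Triangle C := (Triangle.mk g x y).invRotate with hT1def
  have hT1 : T1 ∈ distTriang C := inv_rot_of_distTriang _ hZ
  -- T1 : Z⟦-1⟧ → A → B → Z, with T1.mor₂ = g
  obtain ⟨P, Q, hP, hQ, f, h, hT2⟩ := hsplit (Z⟦(-1 : ℤ)⟧)
  set T2 : Triangle C := Triangle.mk f (0 : P ⟶ Q) h with hT2def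
  have hQ' : t.le 0 (Q⟦(-1 : ℤ)⟧) := t.le_shift (-1) (-1) 0 (by omega) Q hQ
  have hB' : t.le 0 (B⟦(-1 : ℤ)⟧) := t.le_shift (-1) (-1) 0 (by omega) B hB
  -- Step 1: extend `T1.mor₁ : Z⟦-1⟧ ⟶ A` along `f : Z⟦-1⟧ ⟶ P`
  obtain ⟨b₀, hb₀⟩ := Triangle.yoneda_exact₂ _ (inv_rot_of_distTriang _ hT2)
    (T1.mor₁ : Z⟦(-1 : ℤ)⟧ ⟶ A)
    (aux_hom_zero t 0 1 one_pos hQ' hA _)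
  let b : P ⟶ A := b₀
  have hb : T1.mor₁ = f ≫ b := hb₀
  -- Step 2: complete to a morphism of triangles T2 ⟶ T1, getting `b ≫ g = 0`
  obtain ⟨c, hc₁, _⟩ := complete_distinguished_triangle_morphism T2 T1 hT2 hT1
    (𝟙 _) b₀ (hb₀.symm.trans (id_comp _).symm)
  have hbg : b ≫ g = 0 := hc₁.symm.trans zero_comp
  -- Step 3: extend `f : Z⟦-1⟧ ⟶ P` along `T1.mor₁ : Z⟦-1⟧ ⟶ A`
  obtain ⟨b'₀, hb'₀⟩ := Triangle.yoneda_exact₂ _ (inv_rot_of_distTriang _ hT1)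
    (f : Z⟦(-1 : ℤ)⟧ ⟶ P)
    (aux_hom_zero t 0 1 one_pos hB' hP _)
  let b' : A ⟶ P := b'₀
  have hb' : f = T1.mor₁ ≫ b' := hb'₀
  -- Step 4: show `b' ≫ b = 𝟙 A`
  have hkill : T1.mor₁ ≫ (b' ≫ b - 𝟙 A) = 0 := by
    have h1 : T1.mor₁ ≫ b' ≫ b = T1.mor₁ :=
      (assoc _ _ _).symm.trans ((congrArg (· ≫ b) hb'.symm).trans hb.symm)
    have h2 : T1.mor₁ ≫ 𝟙 A = T1.mor₁ := comp_id _
    exact (Preadditive.comp_sub _ _ _).trans ((congrArg₂ (· - ·) h1 h2).trans (sub_self _))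
  obtain ⟨e, he⟩ := Triangle.yoneda_exact₂ _ hT1 (b' ≫ b - 𝟙 A) hkill
  have he0 : e = 0 :=
    aux_hom_zero t (-1) 1 (by omega) hB hA e
  have hb'b : b' ≫ b = 𝟙 A := by
    have h2 : b' ≫ b - 𝟙 A = 0 := by
      rw [he, he0, comp_zero]; rfl
    linear_combination (norm := abel) h2
  calc g = (b' ≫ b) ≫ g := by rw [hb'b, id_comp]
    _ = b' ≫ (b ≫ g) := by rw [assoc]
    _ = 0 := by rw [hbg, comp_zero]

end Aux

theorem heart_of_split_tStructure_is_hereditary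
    {C : Type*} [Category C] [Preadditive C] [HasZeroObject C] [HasShift C ℤ]
    [∀ n : ℤ, (shiftFunctor C n).Additive] [Pretriangulated C]
    (t : TStructure C)
    (hsplit : ∀ X : C, ∃ (P Q : C) (_ : t.ge 1 P) (_ : t.le (-1) Q)
        (f : X ⟶ P) (h : Q ⟶ X⟦(1 : ℤ)⟧),
        Triangle.mk f (0 : P ⟶ Q) h ∈ distTriang C) :
    ∀ (X Y : C), (t.le 0 X ∧ t.ge 0 X) → (t.le 0 Y ∧ t.ge 0 Y) →
      ∀ n : ℤ, n ≠ 0 → n ≠ 1 → ∀ f : X ⟶ Y⟦n⟧, f = 0 := by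
  rintro X Y ⟨hX1, hX2⟩ ⟨hY1, hY2⟩ n hn0 hn1 f
  rcases lt_or_gt_of_ne hn0 with hlt | hgt
  · -- n < 0 : use the t-structure axiom
    exact aux_hom_zero t 0 (-n) (by omega) hX1
      (t.ge_shift 0 n (-n) (by omega) Y hY2) f
  · -- n ≥ 2 : shift by -1 and use splitness
    have hn2 : 2 ≤ n := by omega
    have hX' : t.ge 1 (X⟦(-1 : ℤ)⟧) := t.ge_shift 0 (-1) 1 (by omega) X hX2
    have hY' : t.le (1 - n) ((Y⟦n⟧)⟦(-1 : ℤ)⟧) :=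
      t.le_shift (-n) (-1) (1 - n) (by omega) _ (t.le_shift 0 n (-n) (by omega) Y hY1)
    have hY'' : t.le (-1) ((Y⟦n⟧)⟦(-1 : ℤ)⟧) := t.le_monotone (by omega : (1 - n : ℤ) ≤ -1) _ hY'
    have hz : (shiftFunctor C (-1 : ℤ)).map f = 0 :=
      aux_split_hom_zero t hsplit hX' hY'' _
    apply (shiftFunctor C (-1 : ℤ)).map_injective
    rw [hz, Functor.map_zero]
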